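/- Let d ≥ 1 and let H : ℝ^d → ℝ be convex, Lipschitz continuous with Lipschitz constant L ≥ 0, and differentiable everywhere with gradient ∇H : ℝ^d → ℝ^d Lipschitz continuous with Lipschitz constant L' ≥ 0. Then for every γ ∈ [0,1] and all p, q ∈ ℝ^d one has 0 ≤ H(p) − H(q) − ⟨∇H(q), p − q⟩ ≤ (2L)^{1−γ} (L')^{γ} ‖p − q‖^{1+γ}. -/

import Mathlib

open scoped RealInnerProductSpace

open Real

/-- Gradient inequality for a convex differentiable function:
`⟪∇H x, v⟫ ≤ H (x + v) - H x`. -/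
lemma convex_gradient_key {E : Type*} [NormedAddCommGroup E] [InnerProductSpace ℝ E]
    [CompleteSpace E]
    {H : E → ℝ} {H' : E → E} (hconv : ConvexOn ℝ Set.univ H)
    (hgrad : ∀ p, HasGradientAt H (H' p) p) (x v : E) :
    ⟪H' x, v⟫ ≤ H (x + v) - H x := by
  set g : ℝ → ℝ := fun t => H (x + t • v) with hg
  have hcurve : HasDerivAt (fun t : ℝ => x + t • v) v 0 := by
    simpa using ((hasDerivAt_id (0 : ℝ)).smul_const v).const_add x
  have hgd : HasDerivAt g ⟪H' x, v⟫ 0 := by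
    have h1 : HasFDerivAt H (InnerProductSpace.toDual ℝ E (H' x)) (x + (0 : ℝ) • v) := by
      simpa using (hgrad x).hasFDerivAt
    have := h1.comp_hasDerivAt 0 hcurve
    simpa [InnerProductSpace.toDual_apply_apply, Function.comp_def, g] using this
  have htend : Filter.Tendsto (slope g 0) (nhdsWithin 0 (Set.Ioi (0 : ℝ)))
      (nhds ⟪H' x, v⟫) := by
    have := (hasDerivAt_iff_tendsto_slope.1 hgd)
    exact this.mono_left (nhdsWithin_mono _ (fun t ht => ne_of_gt ht))
  refine le_of_tendsto htend ?_
  filter_upwards [Ioo_mem_nhdsGT_of_mem (Set.left_mem_Ico.2 one_pos)] with t ht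
  obtain ⟨ht0, ht1⟩ := ht
  have hconvt : g t ≤ (1 - t) * H x + t * H (x + v) := by
    have h := hconv.2 (Set.mem_univ x) (Set.mem_univ (x + v))
      (by linarith : (0:ℝ) ≤ 1 - t) (le_of_lt ht0) (by ring)
    have hpt : (1 - t) • x + t • (x + v) = x + t • v := by
      rw [sub_smul, one_smul, smul_add]; abel
    rw [hpt] at h
    exact h
  have hgt : g t - g 0 ≤ t * (H (x + v) - H x) := by
    have hg0 : g 0 = H x := by simp [g]
    rw [hg0]; nlinarith
  rw [slope_def_field, sub_zero, div_le_iff₀ ht0]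
  nlinarith

/-- Interpolated residual bound for a convex Lipschitz Hamiltonian with Lipschitz gradient:
for `γ ∈ [0,1]`, `0 ≤ H(p) − H(q) − ⟪∇H(q), p − q⟫ ≤ (2L)^{1−γ} (L')^{γ} ‖p − q‖^{1+γ}`. -/
theorem convex_interpolated_residual_bound
    (d : ℕ) (hd : 1 ≤ d)
    (H : EuclideanSpace ℝ (Fin d) → ℝ) (H' : EuclideanSpace ℝ (Fin d) → EuclideanSpace ℝ (Fin d))
    (hconv : ConvexOn ℝ Set.univ H)
    (L L' : ℝ) (hL : 0 ≤ L) (hL' : 0 ≤ L')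
    (hlip : ∀ p q, |H p - H q| ≤ L * ‖p - q‖)
    (hgrad : ∀ p, HasGradientAt H (H' p) p)
    (hgradlip : ∀ p q, ‖H' p - H' q‖ ≤ L' * ‖p - q‖) :
    ∀ γ ∈ Set.Icc (0 : ℝ) 1, ∀ p q : EuclideanSpace ℝ (Fin d),
      0 ≤ H p - H q - ⟪H' q, p - q⟫ ∧
      H p - H q - ⟪H' q, p - q⟫ ≤ (2 * L) ^ (1 - γ) * L' ^ γ * ‖p - q‖ ^ (1 + γ) := by
  have key : ∀ x v, ⟪H' x, v⟫ ≤ H (x + v) - H x :=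
    convex_gradient_key hconv hgrad
  -- gradient norm bound
  have hgnorm : ∀ q, ‖H' q‖ ≤ L := by
    intro q
    rcases eq_or_lt_of_le (norm_nonneg (H' q)) with h0 | h0
    · rw [← h0]; exact hL
    · have h1 : ⟪H' q, H' q⟫ ≤ H (q + H' q) - H q := key q (H' q)
      have h2 : H (q + H' q) - H q ≤ L * ‖H' q‖ := by
        have := (abs_le.1 (hlip (q + H' q) q)).2
        simpa using this
      have h3 : ‖H' q‖ ^ 2 ≤ L * ‖H' q‖ := by
        rw [← real_inner_self_eq_norm_sq]; linarith
      nlinarith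
  intro γ hγ p q
  obtain ⟨hγ0, hγ1⟩ := hγ
  set R := H p - H q - ⟪H' q, p - q⟫ with hR
  set r := ‖p - q‖ with hr
  have hr0 : 0 ≤ r := norm_nonneg _
  -- lower bound
  have hlow : 0 ≤ R := by
    have := key q (p - q)
    simp only [add_sub_cancel] at this
    linarith
  refine ⟨hlow, ?_⟩
  -- first order bound: R ≤ 2L r
  have hA : R ≤ 2 * L * r := by
    have h1 : H p - H q ≤ L * r := (abs_le.1 (hlip p q)).2
    have h2 : |⟪H' q, p - q⟫| ≤ L * r := by
      calc |⟪H' q, p - q⟫| ≤ ‖H' q‖ * ‖p - q‖ := abs_real_inner_le_norm _ _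
        _ ≤ L * r := by
          apply mul_le_mul_of_nonneg_right (hgnorm q) (norm_nonneg _)
    have := (abs_le.1 h2).1
    simp only [hR]; linarith
  -- second order bound: R ≤ L' r^2
  have hB : R ≤ L' * r ^ (2 : ℝ) := by
    have h1 : ⟪H' p, q - p⟫ ≤ H q - H p := by
      have := key p (q - p); simpa using this
    have h2 : H p - H q ≤ ⟪H' p, p - q⟫ := by
      have : ⟪H' p, q - p⟫ = -⟪H' p, p - q⟫ := by
        rw [← inner_neg_right]; congr 1; abel
      linarith [h1, this ▸ h1]
    have h3 : R ≤ ⟪H' p - H' q, p - q⟫ := by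
      rw [inner_sub_left]; simp only [hR]; linarith
    have h4 : ⟪H' p - H' q, p - q⟫ ≤ ‖H' p - H' q‖ * ‖p - q‖ :=
      real_inner_le_norm _ _
    have h5 : ‖H' p - H' q‖ * ‖p - q‖ ≤ (L' * r) * r :=
      mul_le_mul_of_nonneg_right (hgradlip p q) (norm_nonneg _)
    have h6 : r ^ (2 : ℝ) = r * r := by
      rw [show (2:ℝ) = ((2:ℕ):ℝ) by norm_num, Real.rpow_natCast]; ring
    rw [h6]; nlinarith
  -- interpolation
  have hA0 : 0 ≤ 2 * L * r := by positivity
  have hB0 : 0 ≤ L' * r ^ (2 : ℝ) := by positivity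
  rcases eq_or_lt_of_le hlow with hR0 | hR0
  · rw [← hR0]; positivity
  have hrpos : 0 < r := by
    rcases eq_or_lt_of_le hr0 with h | h
    · exfalso; nlinarith
    · exact h
  calc R = R ^ ((1 - γ) + γ) := by rw [sub_add_cancel, Real.rpow_one]
    _ = R ^ (1 - γ) * R ^ γ := Real.rpow_add hR0 _ _
    _ ≤ (2 * L * r) ^ (1 - γ) * (L' * r ^ (2 : ℝ)) ^ γ := by
        apply mul_le_mul
        · exact Real.rpow_le_rpow (le_of_lt hR0) hA (by linarith)
        · exact Real.rpow_le_rpow (le_of_lt hR0) hB hγ0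
        · positivity
        · positivity
    _ = (2 * L) ^ (1 - γ) * L' ^ γ * ‖p - q‖ ^ (1 + γ) := by
        rw [Real.mul_rpow (by positivity) hr0, Real.mul_rpow hL' (by positivity),
          ← Real.rpow_mul hr0, ← hr]
        have hrr : r ^ (1 - γ) * r ^ (2 * γ) = r ^ (1 + γ) := by
          rw [← Real.rpow_add hrpos]; ring_nf
        rw [← hrr]; ring
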